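/- Let K/F be a CM-extension of number fields that is cyclic of degree 2^{n+1} and is contained in a Galois extension K/k whose Galois group is the generalized quaternion group Q_{2^{n+2}}, with the unique complex conjugation corresponding to x^{2^n}. Then the only roots of unity in K are ±1. -/

import Mathlib

/-- Let `K/k` be a Galois CM-extension of number fields whose Galois
group is the generalized quaternion group `Q_{2^{n+2}}` (Mathlib's
`QuaternionGroup (2^n)`, `x = QuaternionGroup.a 1`), the unique complex conjugation
corresponding to the central element `x^{2^n}` — i.e. the automorphism corresponding
to `x^{2^n}` inverts every root of unity of `K` (so that `K` is CM over the fixed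
field `F` of the cyclic subgroup `⟨x⟩` of order `2^{n+1}`). Then the only roots of
unity in `K` are `±1`. -/
theorem roots_of_unity_of_quaternion_CM (n : ℕ) (hn : 1 ≤ n)
    (k K : Type) [Field k] [Field K] [NumberField k] [NumberField K]
    [Algebra k K] [IsGalois k K]
    (e : (K ≃ₐ[k] K) ≃* QuaternionGroup (2 ^ n))
    (hj : ∀ ζ : K, (∃ m : ℕ, 0 < m ∧ ζ ^ m = 1) →
      e.symm (QuaternionGroup.a 1 ^ 2 ^ n) ζ = ζ⁻¹) :
    ∀ ζ : K, (∃ m : ℕ, 0 < m ∧ ζ ^ m = 1) → ζ = 1 ∨ ζ = -1 := by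
  intro ζ hζ
  obtain ⟨m, hm, hζm⟩ := hζ
  have hfin : IsOfFinOrder ζ := isOfFinOrder_iff_pow_eq_one.mpr ⟨m, hm, hζm⟩
  set d := orderOf ζ with hd
  have hdpos : 0 < d := hfin.orderOf_pos
  haveI : NeZero d := ⟨hdpos.ne'⟩
  have hprim : IsPrimitiveRoot ζ d := IsPrimitiveRoot.orderOf ζ
  -- the homomorphism Q → (ZMod d)ˣ
  let f : QuaternionGroup (2 ^ n) →* (ZMod d)ˣ :=
    (hprim.autToPow k).comp e.symm.toMonoidHom
  -- the quaternion relation kills the square of f (a 1)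
  have hrel : (QuaternionGroup.xa 0 : QuaternionGroup (2 ^ n)) * QuaternionGroup.a 1
      = QuaternionGroup.a (-1) * QuaternionGroup.xa 0 := by
    rw [QuaternionGroup.xa_mul_a, QuaternionGroup.a_mul_xa]
    norm_num
  have hinv : (QuaternionGroup.a (-1) : QuaternionGroup (2 ^ n))
      = (QuaternionGroup.a 1)⁻¹ := by
    rw [eq_inv_iff_mul_eq_one, QuaternionGroup.a_mul_a]
    simp [QuaternionGroup.one_def, -QuaternionGroup.a_zero]
  have hsq : f (QuaternionGroup.a 1) ^ 2 = 1 := by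
    have := congrArg f hrel
    rw [map_mul, map_mul, mul_comm (f (QuaternionGroup.a (-1)))] at this
    have h1 : f (QuaternionGroup.a 1) = f (QuaternionGroup.a (-1)) :=
      mul_left_cancel this
    rw [hinv, map_inv] at h1
    rw [sq]
    nth_rewrite 2 [h1]
    exact mul_inv_cancel _
  -- hence f (a 1 ^ 2 ^ n) = 1
  have hpow : f (QuaternionGroup.a 1 ^ 2 ^ n) = 1 := by
    rw [map_pow]
    have h2 : f (QuaternionGroup.a 1) ^ 2 ^ n
        = (f (QuaternionGroup.a 1) ^ 2) ^ 2 ^ (n - 1) := by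
      rw [← pow_mul]
      congr 1
      have := Nat.succ_pred_eq_of_pos hn
      calc 2 ^ n = 2 ^ (1 + (n - 1)) := by congr 1; omega
      _ = 2 * 2 ^ (n - 1) := by rw [pow_add, pow_one]
    rw [h2, hsq, one_pow]
  -- so the automorphism fixes ζ
  have hfix : e.symm (QuaternionGroup.a 1 ^ 2 ^ n) ζ = ζ := by
    have hspec := hprim.autToPow_spec k (e.symm (QuaternionGroup.a 1 ^ 2 ^ n))
    have : (hprim.autToPow k (e.symm (QuaternionGroup.a 1 ^ 2 ^ n)) : ZMod d)
        = ((1 : (ZMod d)ˣ) : ZMod d) := by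
      have : f (QuaternionGroup.a 1 ^ 2 ^ n)
          = hprim.autToPow k (e.symm (QuaternionGroup.a 1 ^ 2 ^ n)) := rfl
      rw [← this, hpow]
    rw [this] at hspec
    have hval : ((1 : (ZMod d)ˣ) : ZMod d).val = 1 % d := by
      have : ((1 : (ZMod d)ˣ) : ZMod d) = ((1 : ℕ) : ZMod d) := by norm_num
      rw [this, ZMod.val_natCast]
    rw [hval] at hspec
    rw [← hspec, hd, pow_mod_orderOf, pow_one]
  have hne : ζ ≠ 0 := by
    intro h
    rw [h, zero_pow hm.ne'] at hζm
    exact zero_ne_one hζm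
  have := hj ζ ⟨m, hm, hζm⟩
  rw [hfix] at this
  have hsq1 : ζ * ζ = 1 := by
    nth_rewrite 2 [this]
    exact mul_inv_cancel₀ hne
  exact mul_self_eq_one_iff.mp hsq1
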